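/- arXiv:1607.07862 — 2 statements merged into one kernel-verified Lean document; each statement's English description precedes it below -/
import Mathlib

section
/- Let V = (V_t)_{t∈T} be a representation of a Lévy measure ν on a measure space (S, S, n) (i.e., n(V_I ∈ B) = ν_I(B) for every finite I ⊆ T and every Borel B ⊆ R^I with 0_I ∉ B), and suppose there exists a strictly positive f with ∫_S f dn < ∞. Then there exists a countable T_0 ⊆ T such that the restriction of V to S_0 := {s ∈ S : V_{T_0}(s) ≠ 0} is an exact representation of ν, i.e., the pushforward of n restricted to S_0 under V equals ν. -/
open MeasureTheory Set
open scoped ENNReal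

/-- The inner measure of a measure `ν`: `ν_*(E) = sup{ν(D) : D ⊆ E, D measurable}`. -/
noncomputable def innerMeasure {α : Type*} [MeasurableSpace α] (ν : Measure α) (E : Set α) :
    ℝ≥0∞ :=
  ⨆ (D : Set α) (_ : MeasurableSet D) (_ : D ⊆ E), ν D

lemma aux_exists_countable_determining {T : Type*} {D : Set (T → ℝ)}
    (hD : MeasurableSet D) :
    ∃ J : Set T, J.Countable ∧ ∀ x y : T → ℝ, (∀ t ∈ J, x t = y t) → (x ∈ D ↔ y ∈ D) := by
  let M : MeasurableSpace (T → ℝ) :=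
  { MeasurableSet' := fun D => ∃ J : Set T, J.Countable ∧
      ∀ x y : T → ℝ, (∀ t ∈ J, x t = y t) → (x ∈ D ↔ y ∈ D)
    measurableSet_empty := ⟨∅, countable_empty, fun _ _ _ => Iff.rfl⟩
    measurableSet_compl := fun s ⟨J, hJc, hJ⟩ => ⟨J, hJc, fun x y h => not_congr (hJ x y h)⟩
    measurableSet_iUnion := fun s hs => by
      choose J hJc hJ using hs
      refine ⟨⋃ i, J i, countable_iUnion hJc, fun x y h => ?_⟩
      simp only [mem_iUnion]
      exact exists_congr fun i => hJ i x y fun t ht => h t (mem_iUnion.2 ⟨i, ht⟩) }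
  have hle : (MeasurableSpace.pi : MeasurableSpace (T → ℝ)) ≤ M := by
    rw [← generateFrom_measurableCylinders]
    refine MeasurableSpace.generateFrom_le fun C hC => ?_
    obtain ⟨s, B, hB, rfl⟩ := (mem_measurableCylinders _).mp hC
    refine ⟨(s : Set T), s.countable_toSet, fun x y h => ?_⟩
    simp only [mem_cylinder]
    have : s.restrict x = s.restrict y := funext fun i => h i i.2
    rw [this]
  exact hle D hD

lemma aux_enum_exhaust {T : Type*} {J : Set T} (hJ : J.Countable) (hne : J.Nonempty) :
    ∃ E : ℕ → Finset T, Monotone E ∧ (∀ k, ↑(E k) ⊆ J) ∧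
      ∀ t ∈ J, ∀ r : ℝ, 0 < r → ∃ k, t ∈ E k ∧ 1 / ((k : ℝ) + 1) ≤ r := by
  classical
  obtain ⟨e, rfl⟩ := hJ.exists_eq_range hne
  refine ⟨fun k => (Finset.range (k + 1)).image e, ?_, ?_, ?_⟩
  · intro k l hkl
    exact Finset.image_subset_image (Finset.range_subset_range.2 (by omega))
  · intro k t ht
    simp only [Finset.coe_image, mem_image] at ht
    obtain ⟨m, -, rfl⟩ := ht
    exact mem_range_self m
  · rintro t ⟨m, rfl⟩ r hr
    obtain ⟨k0, hk0⟩ := exists_nat_one_div_lt hr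
    refine ⟨max m k0, ?_, ?_⟩
    · exact Finset.mem_image_of_mem e (Finset.mem_range.2 (by omega))
    · refine le_trans ?_ hk0.le
      apply one_div_le_one_div_of_le (by positivity)
      exact_mod_cast Nat.succ_le_succ (Nat.le_max_right m k0)

lemma aux_W_measurable {T : Type*} (F : Finset T) (ε : ℝ) :
    MeasurableSet {x : T → ℝ | ∃ t ∈ F, ε ≤ |x t|} := by
  have h : {x : T → ℝ | ∃ t ∈ F, ε ≤ |x t|} = ⋃ t ∈ F, {x : T → ℝ | ε ≤ |x t|} := by
    ext x; simp
  rw [h]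
  exact MeasurableSet.biUnion F.countable_toSet fun t _ =>
    measurableSet_le measurable_const (measurable_pi_apply t).abs

lemma aux_W_finite {T : Type*} (ν : Measure (T → ℝ))
    (hL1 : ∀ t : T, ∫⁻ x : T → ℝ, ENNReal.ofReal (min ((x t) ^ 2) 1) ∂ν < ⊤)
    (F : Finset T) (ε : ℝ) (hε : 0 < ε) :
    ν {x : T → ℝ | ∃ t ∈ F, ε ≤ |x t|} < ⊤ := by
  have h : {x : T → ℝ | ∃ t ∈ F, ε ≤ |x t|} = ⋃ t ∈ F, {x : T → ℝ | ε ≤ |x t|} := by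
    ext x; simp
  rw [h]
  refine lt_of_le_of_lt (measure_biUnion_finset_le F _) (ENNReal.sum_lt_top.mpr fun t _ => ?_)
  -- single coordinate
  have hδ : (0 : ℝ) < min (ε ^ 2) 1 := lt_min (by positivity) one_pos
  set g : (T → ℝ) → ℝ≥0∞ := fun x => ENNReal.ofReal (min ((x t) ^ 2) 1) with hgdef
  have hgm : Measurable g := (((measurable_pi_apply t).pow_const 2).min measurable_const).ennreal_ofReal
  have hsub : {x : T → ℝ | ε ≤ |x t|} ⊆ {x : T → ℝ | ENNReal.ofReal (min (ε ^ 2) 1) ≤ g x} := by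
    intro x hx
    simp only [mem_setOf_eq] at hx ⊢
    refine ENNReal.ofReal_le_ofReal (min_le_min ?_ le_rfl)
    have h2 := sq_abs (x t)
    nlinarith [abs_nonneg (x t)]
  have hmul : ENNReal.ofReal (min (ε ^ 2) 1) * ν {x : T → ℝ | ENNReal.ofReal (min (ε ^ 2) 1) ≤ g x}
      ≤ ∫⁻ x, g x ∂ν := mul_meas_ge_le_lintegral₀ hgm.aemeasurable _
  by_contra hcon
  rw [not_lt, top_le_iff] at hcon
  have h1 : ν {x : T → ℝ | ENNReal.ofReal (min (ε ^ 2) 1) ≤ g x} = ⊤ :=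
    top_le_iff.mp (hcon ▸ measure_mono hsub)
  rw [h1, ENNReal.mul_top (by simp [ENNReal.ofReal_eq_zero, not_le]; positivity)] at hmul
  exact absurd (top_le_iff.mp hmul) (hL1 t).ne

lemma aux_key_agree {T S : Type*} [MeasurableSpace S]
    (n : Measure S) (ν : Measure (T → ℝ))
    (hL1 : ∀ t : T, ∫⁻ x : T → ℝ, ENNReal.ofReal (min ((x t) ^ 2) 1) ∂ν < ⊤)
    (V : S → T → ℝ) (hVm : ∀ t, Measurable fun s => V s t)
    (hrep : ∀ I : Finset T, I.Nonempty → ∀ B : Set ({t // t ∈ I} → ℝ), MeasurableSet B →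
      (fun _ => (0 : ℝ)) ∉ B →
      n ((fun s (i : {t // t ∈ I}) => V s i.1) ⁻¹' B) = ν ((fun x (i : {t // t ∈ I}) => x i.1) ⁻¹' B))
    (F : Finset T) (ε : ℝ) (hε : 0 < ε) (A : Set (T → ℝ)) (hA : MeasurableSet A) :
    n (V ⁻¹' (A ∩ {x | ∃ t ∈ F, ε ≤ |x t|})) = ν (A ∩ {x | ∃ t ∈ F, ε ≤ |x t|}) := by
  classical
  have hV : Measurable V := measurable_pi_lambda _ hVm
  rcases F.eq_empty_or_nonempty with rfl | hF
  · simp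
  set W := {x : T → ℝ | ∃ t ∈ F, ε ≤ |x t|} with hWdef
  have hWm : MeasurableSet W := aux_W_measurable F ε
  have hνW : ν W < ⊤ := aux_W_finite ν hL1 F ε hε
  -- cylinder computation
  have hcyl : ∀ (I : Finset T) (B : Set ({t // t ∈ I} → ℝ)), MeasurableSet B →
      n (V ⁻¹' (cylinder I B ∩ W)) = ν (cylinder I B ∩ W) := by
    intro I B hB
    set K := I ∪ F with hK
    have hIK : I ⊆ K := Finset.subset_union_left
    have hFK : F ⊆ K := Finset.subset_union_right
    obtain ⟨t0, ht0⟩ := hF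
    have hKne : K.Nonempty := ⟨t0, hFK ht0⟩
    set π : ({t // t ∈ K} → ℝ) → ({t // t ∈ I} → ℝ) := fun y i => y ⟨i.1, hIK i.2⟩ with hπ
    have hπm : Measurable π := measurable_pi_lambda _ fun i => measurable_pi_apply _
    set WK : Set ({t // t ∈ K} → ℝ) := {y | ∃ i : {t // t ∈ K}, i.1 ∈ F ∧ ε ≤ |y i|} with hWK
    have hWKm : MeasurableSet WK := by
      have h : WK = ⋃ i : {t // t ∈ K}, {y : {t // t ∈ K} → ℝ | i.1 ∈ F ∧ ε ≤ |y i|} := by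
        ext y; simp [hWK]
      rw [h]
      refine MeasurableSet.iUnion fun i => ?_
      by_cases hi : i.1 ∈ F
      · simp only [hi, true_and]
        exact measurableSet_le measurable_const (measurable_pi_apply i).abs
      · simp [hi]
    set B' : Set ({t // t ∈ K} → ℝ) := π ⁻¹' B ∩ WK with hB'
    have hB'm : MeasurableSet B' := (hπm hB).inter hWKm
    have h0 : (fun _ => (0 : ℝ)) ∉ B' := by
      rintro ⟨-, i, -, hi⟩
      simp at hi
      linarith
    have hpre : ∀ x : T → ℝ, ((fun i : {t // t ∈ K} => x i.1) ∈ B') ↔ x ∈ cylinder I B ∩ W := by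
      intro x
      constructor
      · rintro ⟨h1, i, hiF, hi⟩
        exact ⟨h1, ⟨i.1, hiF, hi⟩⟩
      · rintro ⟨h1, t, htF, ht⟩
        exact ⟨h1, ⟨⟨t, hFK htF⟩, htF, ht⟩⟩
    have e1 : V ⁻¹' (cylinder I B ∩ W) = (fun s (i : {t // t ∈ K}) => V s i.1) ⁻¹' B' :=
      Set.ext fun s => (hpre (V s)).symm
    have e2 : cylinder I B ∩ W = (fun x (i : {t // t ∈ K}) => x i.1) ⁻¹' B' :=
      Set.ext fun x => (hpre x).symm
    rw [e1, e2]
    exact hrep K hKne B' hB'm h0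
  -- extension to all measurable sets via π-λ
  set μ1 := (Measure.map V n).restrict W with hμ1
  set μ2 := ν.restrict W with hμ2
  have hmap : ∀ A : Set (T → ℝ), MeasurableSet A → μ1 A = n (V ⁻¹' (A ∩ W)) := by
    intro A hA
    rw [hμ1, Measure.restrict_apply hA, Measure.map_apply hV (hA.inter hWm)]
  have hW' : n (V ⁻¹' W) = ν W := by
    have h := hcyl F univ MeasurableSet.univ
    rwa [cylinder_univ, univ_inter] at h
  haveI h1 : IsFiniteMeasure μ1 := by
    constructor
    rw [hmap univ MeasurableSet.univ, univ_inter, hW']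
    exact hνW
  haveI h2 : IsFiniteMeasure μ2 := by
    constructor
    rw [hμ2, Measure.restrict_apply MeasurableSet.univ, univ_inter]
    exact hνW
  have hext : μ1 = μ2 := by
    refine ext_of_generate_finite (measurableCylinders fun _ : T => ℝ)
      generateFrom_measurableCylinders.symm isPiSystem_measurableCylinders ?_ ?_
    · intro C hC
      obtain ⟨I, B, hB, rfl⟩ := (mem_measurableCylinders _).mp hC
      rw [hmap _ hB.cylinder, hμ2, Measure.restrict_apply hB.cylinder]
      exact hcyl I B hB
    · rw [hmap univ MeasurableSet.univ, hμ2, Measure.restrict_apply MeasurableSet.univ,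
        univ_inter]
      exact hW'
  have := hmap A hA
  rw [hext, hμ2, Measure.restrict_apply hA] at this
  exact this.symm

lemma aux_exists_maximal {T S : Type*} [MeasurableSpace S] (n : Measure S)
    (V : S → T → ℝ) (hVm : ∀ t, Measurable fun s => V s t)
    (f : S → ℝ) (hfm : Measurable f) (hfpos : ∀ s, 0 < f s)
    (hfint : ∫⁻ s, ENNReal.ofReal (f s) ∂n < ⊤) :
    ∃ T0 : Set T, T0.Countable ∧
      ∀ t : T, n ({s | V s t ≠ 0} \ {s | ∃ u ∈ T0, V s u ≠ 0}) = 0 := by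
  classical
  have hVne : ∀ t : T, MeasurableSet {s : S | V s t ≠ 0} := fun t =>
    (measurableSet_singleton (0 : ℝ)).compl.preimage (hVm t)
  have hS0meas : ∀ T0 : Set T, T0.Countable → MeasurableSet {s : S | ∃ t ∈ T0, V s t ≠ 0} := by
    intro T0 hc
    have h : {s : S | ∃ t ∈ T0, V s t ≠ 0} = ⋃ t ∈ T0, {s : S | V s t ≠ 0} := by ext s; simp
    rw [h]
    exact MeasurableSet.biUnion hc fun t _ => hVne t
  set g : Set T → ℝ≥0∞ :=
    fun T0 => ∫⁻ s in {s : S | ∃ t ∈ T0, V s t ≠ 0}, ENNReal.ofReal (f s) ∂n with hg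
  have hgmono : ∀ {A B : Set T}, A ⊆ B → g A ≤ g B := by
    intro A B hAB
    refine lintegral_mono_set fun s hs => ?_
    obtain ⟨t, htA, h⟩ := hs
    exact ⟨t, hAB htA, h⟩
  have hgle : ∀ T0 : Set T, g T0 ≤ ∫⁻ s, ENNReal.ofReal (f s) ∂n := fun T0 =>
    setLIntegral_le_lintegral _ _
  set c : ℝ≥0∞ := ⨆ (T0 : Set T) (_ : T0.Countable), g T0 with hc
  have hclt : c < ⊤ := lt_of_le_of_lt (iSup₂_le fun T0 _ => hgle T0) hfint
  have hseq : ∀ m : ℕ, ∃ T0 : Set T, T0.Countable ∧ c - 1 / ((m : ℝ≥0∞) + 1) ≤ g T0 := by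
    intro m
    rcases le_or_gt c (1 / ((m : ℝ≥0∞) + 1)) with h | h
    · exact ⟨∅, countable_empty, by rw [tsub_eq_zero_of_le h]; exact zero_le⟩
    · have hlt : c - 1 / ((m : ℝ≥0∞) + 1) < c :=
        ENNReal.sub_lt_self hclt.ne (ne_of_gt (lt_of_le_of_lt zero_le h)) (by simp)
      rw [hc] at hlt
      obtain ⟨T0, hT0⟩ := lt_iSup_iff.mp hlt
      obtain ⟨hcnt, hT0'⟩ := lt_iSup_iff.mp hT0
      exact ⟨T0, hcnt, hT0'.le⟩
  choose T0seq hT0c hT0g using hseq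
  set T0 : Set T := ⋃ m, T0seq m with hT0def
  have hT0cnt : T0.Countable := countable_iUnion hT0c
  have hgT0 : c ≤ g T0 := by
    have hgfin : g T0 ≠ ⊤ := (lt_of_le_of_lt (hgle T0) hfint).ne
    refine ENNReal.le_of_forall_pos_le_add fun δ hδ _ => ?_
    obtain ⟨m, hm⟩ := ENNReal.exists_inv_nat_lt
      (show ((δ : ℝ≥0∞)) ≠ 0 by exact_mod_cast hδ.ne')
    have h1 : (1 : ℝ≥0∞) / ((m : ℝ≥0∞) + 1) ≤ (δ : ℝ≥0∞) := by
      calc (1 : ℝ≥0∞) / ((m : ℝ≥0∞) + 1) = ((m : ℝ≥0∞) + 1)⁻¹ := one_div _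
        _ ≤ ((m : ℝ≥0∞))⁻¹ := ENNReal.inv_le_inv.mpr le_self_add
        _ ≤ (δ : ℝ≥0∞) := hm.le
    have h2 : c ≤ g (T0seq m) + 1 / ((m : ℝ≥0∞) + 1) := tsub_le_iff_right.mp (hT0g m)
    calc c ≤ g (T0seq m) + 1 / ((m : ℝ≥0∞) + 1) := h2
      _ ≤ g T0 + (δ : ℝ≥0∞) := add_le_add (hgmono (subset_iUnion T0seq m)) h1
  have hgfin : g T0 ≠ ⊤ := (lt_of_le_of_lt (hgle T0) hfint).ne
  refine ⟨T0, hT0cnt, fun t => ?_⟩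
  set D : Set S := {s : S | V s t ≠ 0} \ {s : S | ∃ u ∈ T0, V s u ≠ 0} with hDdef
  have hS0m : MeasurableSet {s : S | ∃ u ∈ T0, V s u ≠ 0} := hS0meas T0 hT0cnt
  have hDm : MeasurableSet D := (hVne t).diff hS0m
  have hins : {s : S | ∃ u ∈ insert t T0, V s u ≠ 0}
      = {s : S | ∃ u ∈ T0, V s u ≠ 0} ∪ D := by
    ext s
    simp only [hDdef, mem_insert_iff, mem_union, mem_diff, mem_setOf_eq]
    constructor
    · rintro ⟨u, (rfl | hu), hne⟩
      · by_cases hs : ∃ u ∈ T0, V s u ≠ 0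
        · exact Or.inl hs
        · exact Or.inr ⟨hne, hs⟩
      · exact Or.inl ⟨u, hu, hne⟩
    · rintro (⟨u, hu, hne⟩ | ⟨hne, -⟩)
      · exact ⟨u, Or.inr hu, hne⟩
      · exact ⟨t, Or.inl rfl, hne⟩
  have hDis : Disjoint {s : S | ∃ u ∈ T0, V s u ≠ 0} D := disjoint_sdiff_self_right
  have h2 : g (insert t T0) = g T0 + ∫⁻ s in D, ENNReal.ofReal (f s) ∂n := by
    simp only [hg]
    rw [hins, lintegral_union hDm hDis]
  have h3 : ∫⁻ s in D, ENNReal.ofReal (f s) ∂n = 0 := by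
    by_contra h0
    have hlt2 : g T0 < g T0 + ∫⁻ s in D, ENNReal.ofReal (f s) ∂n :=
      ENNReal.lt_add_right hgfin h0
    rw [← h2] at hlt2
    have : g (insert t T0) ≤ c := by
      rw [hc]
      exact le_iSup₂_of_le (insert t T0) (hT0cnt.insert t) le_rfl
    have hcT0 : g T0 = c := le_antisymm
      (by rw [hc]; exact le_iSup₂_of_le T0 hT0cnt le_rfl) hgT0
    rw [hcT0] at hlt2
    exact absurd (lt_of_lt_of_le hlt2 this) (lt_irrefl c)
  have hae := (setLIntegral_eq_zero_iff hDm hfm.ennreal_ofReal).mp h3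
  have hae2 : ∀ᵐ s ∂n, s ∈ D → ENNReal.ofReal (f s) = 0 := hae
  have : ∀ᵐ s ∂n, s ∉ D := by
    filter_upwards [hae2] with s hs hsD
    exact absurd (hs hsD) (ENNReal.ofReal_pos.mpr (hfpos s)).ne'
  exact measure_eq_zero_iff_ae_notMem.mpr this

/-- Any representation `V` of a Lévy measure `ν` on a σ-finite measure space `(S, 𝒮, n)`
can be made exact by restricting it to `S₀ = {s : V_{T₀}(s) ≠ 0}` for a suitable
countable `T₀ ⊆ T`: the pushforward of `n` restricted to `S₀` under `V` equals `ν`. -/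
theorem representation_restrict_exact {T S : Type*} [MeasurableSpace S]
    (n : Measure S) (ν : Measure (T → ℝ))
    (hL1 : ∀ t : T, ∫⁻ x : T → ℝ, ENNReal.ofReal (min ((x t) ^ 2) 1) ∂ν < ⊤)
    (hL2 : ∀ A : Set (T → ℝ), MeasurableSet A → ν A = innerMeasure ν (A \ {0}))
    (V : S → T → ℝ) (hVm : ∀ t, Measurable fun s => V s t)
    (hrep : ∀ I : Finset T, I.Nonempty → ∀ B : Set ({t // t ∈ I} → ℝ), MeasurableSet B →
      (fun _ => (0 : ℝ)) ∉ B →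
      n ((fun s (i : {t // t ∈ I}) => V s i.1) ⁻¹' B) = ν ((fun x (i : {t // t ∈ I}) => x i.1) ⁻¹' B))
    (f : S → ℝ) (hfm : Measurable f) (hfpos : ∀ s, 0 < f s)
    (hfint : ∫⁻ s, ENNReal.ofReal (f s) ∂n < ⊤) :
    ∃ T0 : Set T, T0.Countable ∧
      Measure.map V (n.restrict {s | ∃ t ∈ T0, V s t ≠ 0}) = ν := by
  classical
  have hV : Measurable V := measurable_pi_lambda _ hVm
  obtain ⟨T0, hT0cnt, hnull⟩ := aux_exists_maximal n V hVm f hfm hfpos hfint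
  set S0 : Set S := {s | ∃ t ∈ T0, V s t ≠ 0} with hS0def
  have hS0m : MeasurableSet S0 := by
    have h : S0 = ⋃ t ∈ T0, {s : S | V s t ≠ 0} := by ext s; simp [hS0def]
    rw [h]
    exact MeasurableSet.biUnion hT0cnt fun t _ =>
      (measurableSet_singleton (0 : ℝ)).compl.preimage (hVm t)
  have key := aux_key_agree n ν hL1 V hVm hrep
  refine ⟨T0, hT0cnt, Measure.ext fun A hA => ?_⟩
  have hμA : Measure.map V (n.restrict S0) A = n (V ⁻¹' A ∩ S0) := by
    rw [Measure.map_apply hV hA, Measure.restrict_apply (hA.preimage hV)]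
  rw [hμA]
  refine le_antisymm ?_ ?_
  · -- n (V⁻¹A ∩ S0) ≤ ν A
    rcases T0.eq_empty_or_nonempty with h0 | hne
    · have h : S0 = ∅ := by rw [hS0def, h0]; ext s; simp
      rw [h]; simp
    · obtain ⟨E, hEmono, hEsub, hEex⟩ := aux_enum_exhaust hT0cnt hne
      set W : ℕ → Set (T → ℝ) := fun k => {x | ∃ t ∈ E k, 1 / ((k : ℝ) + 1) ≤ |x t|} with hW
      have hWmono : Monotone fun k => V ⁻¹' A ∩ V ⁻¹' (W k) := by
        intro k l hkl
        refine inter_subset_inter le_rfl (preimage_mono ?_)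
        rintro x ⟨t, htE, hxt⟩
        refine ⟨t, hEmono hkl htE, le_trans ?_ hxt⟩
        apply one_div_le_one_div_of_le (by positivity)
        have h : (k : ℝ) ≤ l := by exact_mod_cast hkl
        linarith
      have hcover : V ⁻¹' A ∩ S0 = ⋃ k, (V ⁻¹' A ∩ V ⁻¹' (W k)) := by
        ext s
        simp only [hS0def, hW, mem_iUnion, mem_inter_iff, mem_preimage, mem_setOf_eq]
        constructor
        · rintro ⟨hsA, t, htT0, hne'⟩
          obtain ⟨k, hkE, hkle⟩ := hEex t htT0 |V s t| (abs_pos.mpr hne')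
          exact ⟨k, hsA, ⟨t, hkE, hkle⟩⟩
        · rintro ⟨k, hsA, t, htE, hle⟩
          refine ⟨hsA, t, hEsub k htE, fun h0 => ?_⟩
          rw [h0, abs_zero] at hle
          have hp : (0 : ℝ) < 1 / ((k : ℝ) + 1) := by positivity
          linarith
      rw [hcover, hWmono.measure_iUnion]
      refine iSup_le fun k => ?_
      have h1 : V ⁻¹' A ∩ V ⁻¹' (W k) = V ⁻¹' (A ∩ W k) := (preimage_inter).symm
      have h2 : n (V ⁻¹' (A ∩ W k)) = ν (A ∩ W k) :=
        key (E k) (1 / ((k : ℝ) + 1)) (by positivity) A hA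
      rw [h1, h2]
      exact measure_mono inter_subset_left
  · -- ν A ≤ n (V⁻¹A ∩ S0)
    rw [hL2 A hA, innerMeasure]
    refine iSup_le fun D => iSup_le fun hDm => iSup_le fun hDsub => ?_
    obtain ⟨J, hJc, hJdet⟩ := aux_exists_countable_determining hDm
    have hDU : D ⊆ {x : T → ℝ | ∃ t ∈ J, x t ≠ 0} := by
      intro x hx
      by_contra hcon
      have hcon' : ∀ t ∈ J, x t = 0 := by
        intro t ht
        by_contra hne'
        exact hcon ⟨t, ht, hne'⟩
      have hy : (fun t => if t ∈ J then x t else 0) ∈ D :=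
        (hJdet x _ (fun t ht => by simp [ht])).mp hx
      have hyz : (fun t => if t ∈ J then x t else (0 : ℝ)) = 0 := by
        funext t
        by_cases ht : t ∈ J
        · simp [ht, hcon' t ht]
        · simp [ht]
      rw [hyz] at hy
      exact (hDsub hy).2 rfl
    rcases D.eq_empty_or_nonempty with rfl | hDne
    · simp
    obtain ⟨x0, hx0⟩ := hDne
    obtain ⟨t0, ht0J, -⟩ := hDU hx0
    obtain ⟨E, hEmono, hEsub, hEex⟩ := aux_enum_exhaust hJc ⟨t0, ht0J⟩
    set W : ℕ → Set (T → ℝ) := fun k => {x | ∃ t ∈ E k, 1 / ((k : ℝ) + 1) ≤ |x t|} with hW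
    have hmono2 : Monotone fun k => D ∩ W k := by
      intro k l hkl
      refine inter_subset_inter le_rfl ?_
      rintro x ⟨t, htE, hxt⟩
      refine ⟨t, hEmono hkl htE, le_trans ?_ hxt⟩
      apply one_div_le_one_div_of_le (by positivity)
      have h : (k : ℝ) ≤ l := by exact_mod_cast hkl
      linarith
    have hcover2 : D = ⋃ k, (D ∩ W k) := by
      ext x
      simp only [hW, mem_iUnion, mem_inter_iff, mem_setOf_eq]
      constructor
      · intro hx
        obtain ⟨t, htJ, hne'⟩ := hDU hx
        obtain ⟨k, hkE, hkle⟩ := hEex t htJ |x t| (abs_pos.mpr hne')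
        exact ⟨k, hx, ⟨t, hkE, hkle⟩⟩
      · rintro ⟨k, hx, -⟩; exact hx
    calc ν D = ⨆ k, ν (D ∩ W k) := by rw [← hmono2.measure_iUnion, ← hcover2]
      _ ≤ n (V ⁻¹' A ∩ S0) := ?_
    refine iSup_le fun k => ?_
    have h2 : ν (D ∩ W k) = n (V ⁻¹' (D ∩ W k)) :=
      (key (E k) (1 / ((k : ℝ) + 1)) (by positivity) D hDm).symm
    rw [h2]
    have hsub2 : V ⁻¹' (D ∩ W k)
        ⊆ (V ⁻¹' A ∩ S0) ∪ ⋃ t ∈ (↑(E k) : Set T), ({s : S | V s t ≠ 0} \ S0) := by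
      rintro s ⟨hsD, t, htE, hle⟩
      have hsA : V s ∈ A := (hDsub hsD).1
      by_cases hsS0 : s ∈ S0
      · exact Or.inl ⟨hsA, hsS0⟩
      · refine Or.inr (mem_iUnion₂.mpr ⟨t, Finset.mem_coe.mpr htE, ⟨fun h0 => ?_, hsS0⟩⟩)
        rw [h0, abs_zero] at hle
        have hp : (0 : ℝ) < 1 / ((k : ℝ) + 1) := by positivity
        linarith
    calc n (V ⁻¹' (D ∩ W k))
        ≤ n ((V ⁻¹' A ∩ S0) ∪ ⋃ t ∈ (↑(E k) : Set T), ({s : S | V s t ≠ 0} \ S0)) :=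
          measure_mono hsub2
      _ ≤ n (V ⁻¹' A ∩ S0) + n (⋃ t ∈ (↑(E k) : Set T), ({s : S | V s t ≠ 0} \ S0)) :=
          measure_union_le _ _
      _ = n (V ⁻¹' A ∩ S0) := by
          rw [(measure_biUnion_null_iff (E k).countable_toSet).mpr fun t _ => hnull t, add_zero]
end

section
/- Let T be an uncountable set and let ν be the counting measure on the set E = {e_s : s ∈ T} ⊂ R^T of coordinate unit functions (e_s(t) = 1 if t = s, else 0). Then ν is a Lévy measure on (R^T, B^T) — it satisfies ∫ (|x(t)|^2 ∧ 1) ν(dx) = 1 < ∞ for each t and ν(A) = ν_*(A \ {0_T}) for every A ∈ B^T — but ν is not σ-finite. -/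
open scoped Classical

open MeasureTheory Set
open scoped ENNReal

/-- For `T` uncountable, the counting measure `ν` of the set of coordinate unit functions
`{e_s : s ∈ T}` in `ℝ^T` is a Lévy measure—satisfying (L1) with
`∫ (|x(t)|² ∧ 1) ν(dx) = 1` for each `t`, and (L2)—but it is not σ-finite. -/
theorem counting_measure_unit_functions_levy_not_sigmaFinite {T : Type*} [Uncountable T]
    (ν : Measure (T → ℝ))
    (hν : ν = Measure.sum fun s : T =>
      Measure.dirac (fun t : T => if t = s then (1 : ℝ) else 0)) :
    (∀ t : T, ∫⁻ x : T → ℝ, ENNReal.ofReal (min ((x t) ^ 2) 1) ∂ν = 1) ∧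
    (∀ A : Set (T → ℝ), MeasurableSet A → ν A = innerMeasure ν (A \ {0})) ∧
    ¬ SigmaFinite ν := by
  classical
  set e : T → (T → ℝ) := fun s t => if t = s then (1 : ℝ) else 0 with he
  have hν' : ∀ A : Set (T → ℝ), MeasurableSet A →
      ν A = ∑' s : T, (if e s ∈ A then (1 : ℝ≥0∞) else 0) := by
    intro A hA
    rw [hν, Measure.sum_apply _ hA]
    congr 1
    ext s
    rw [Measure.dirac_apply' _ hA]
    simp [Set.indicator_apply, he]
  refine ⟨?_, ?_, ?_⟩
  · -- (L1)
    intro t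
    have hmeas : Measurable fun x : T → ℝ => ENNReal.ofReal (min ((x t) ^ 2) 1) := by
      exact ((measurable_pi_apply t).pow_const 2).min measurable_const
        |>.ennreal_ofReal
    rw [hν, lintegral_sum_measure]
    have h1 : ∀ s : T,
        ∫⁻ x : T → ℝ, ENNReal.ofReal (min ((x t) ^ 2) 1)
          ∂(Measure.dirac (fun u : T => if u = s then (1 : ℝ) else 0))
        = if t = s then 1 else 0 := by
      intro s
      rw [lintegral_dirac' _ hmeas]
      split_ifs with h <;> simp [h]
    simp_rw [h1]
    exact (tsum_congr fun s => by rw [show (t = s) = (s = t) from propext eq_comm]).trans (tsum_ite_eq t (fun _ => (1 : ℝ≥0∞)) : ∑' s, (if s = t then (1:ℝ≥0∞) else 0) = 1)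
  · -- (L2)
    intro A hA
    apply le_antisymm
    · rw [hν' A hA, ENNReal.tsum_eq_iSup_sum]
      refine iSup_le fun F => ?_
      set D : Set (T → ℝ) := A ∩ ⋃ s ∈ (F : Set T), {x | x s = 1} with hD
      have hDmeas : MeasurableSet D := by
        refine hA.inter (MeasurableSet.biUnion F.countable_toSet fun s _ => ?_)
        have hre : {x : T → ℝ | x s = 1} = (fun x : T → ℝ => x s) ⁻¹' {1} := rfl
        rw [hre]
        exact (measurable_pi_apply s) (measurableSet_singleton (1 : ℝ))
      have hsub : D ⊆ A \ {0} := by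
        rintro x ⟨hxA, hxU⟩
        obtain ⟨s, -, hs⟩ := Set.mem_iUnion₂.mp hxU
        refine ⟨hxA, fun hx0 => ?_⟩
        rw [Set.mem_singleton_iff] at hx0
        have : x s = 0 := by rw [hx0]; rfl
        simp [this] at hs
      have hkey : (∑ s ∈ F, (if e s ∈ A then (1 : ℝ≥0∞) else 0)) ≤ ν D := by
        rw [hν' D hDmeas]
        refine le_trans (Finset.sum_le_sum fun s hs => ?_) (ENNReal.sum_le_tsum F)
        by_cases hsa : e s ∈ A
        · have : e s ∈ D := by
            refine ⟨hsa, Set.mem_iUnion₂.mpr ⟨s, hs, ?_⟩⟩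
            simp [he]
          simp [hsa, this]
        · simp [hsa]
      refine le_trans hkey ?_
      exact le_iSup_of_le D (le_iSup_of_le hDmeas (le_iSup_of_le hsub le_rfl))
    · refine iSup_le fun D => iSup_le fun hD => iSup_le fun hsub => ?_
      exact measure_mono (hsub.trans Set.diff_subset)
  · -- not σ-finite
    intro hsf
    have hcount : ∀ n : ℕ, {s : T | e s ∈ MeasureTheory.spanningSets ν n}.Countable := by
      intro n
      by_contra hunc
      have hinf : {s : T | e s ∈ MeasureTheory.spanningSets ν n}.Infinite :=
        fun hfin => hunc hfin.countable
      have hfin : ν (MeasureTheory.spanningSets ν n) < ⊤ :=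
        MeasureTheory.measure_spanningSets_lt_top ν n
      obtain ⟨m, hm⟩ := ENNReal.exists_nat_gt hfin.ne
      obtain ⟨Fs, hFsub, hcard⟩ := hinf.exists_subset_card_eq m
      have hle : (m : ℝ≥0∞) ≤ ν (MeasureTheory.spanningSets ν n) := by
        rw [hν' _ (MeasureTheory.measurableSet_spanningSets ν n)]
        calc (m : ℝ≥0∞) = ∑ s ∈ Fs, (if e s ∈ MeasureTheory.spanningSets ν n then (1 : ℝ≥0∞) else 0) := by
              have hall : ∀ s ∈ Fs,
                  (if e s ∈ MeasureTheory.spanningSets ν n then (1:ℝ≥0∞) else 0) = 1 :=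
                fun s hs => if_pos (show e s ∈ MeasureTheory.spanningSets ν n from hFsub hs)
              rw [Finset.sum_congr rfl hall, Finset.sum_const, hcard]
              simp
          _ ≤ _ := ENNReal.sum_le_tsum Fs
      exact absurd hle (not_le.mpr hm)
    have huniv : (Set.univ : Set T).Countable := by
      refine (Set.countable_iUnion hcount).mono ?_
      intro s _
      have : e s ∈ ⋃ n, MeasureTheory.spanningSets ν n := by
        rw [MeasureTheory.iUnion_spanningSets]; trivial
      obtain ⟨n, hn⟩ := Set.mem_iUnion.mp this
      exact Set.mem_iUnion.mpr ⟨n, hn⟩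
    exact (not_countable_iff.mpr inferInstance) (Set.countable_univ_iff.mp huniv)
end
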